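/- Let Q be a finite abelian group of m×m unitary complex matrices with |Q| = n, let φ ∈ ℂ^m, and suppose the vectors {Uφ : U ∈ Q} span ℂ^m. Let S = Σ_{U ∈ Q} (Uφ)(Uφ)* be the frame operator. For each character χ : Q → ℂˣ set λ_χ = Σ_{U ∈ Q} χ(U)·⟨φ, Uφ⟩. Then each λ_χ is a nonnegative real number, and the multiset of eigenvalues of S (with multiplicity, m in total) equals the multiset of nonzero values among {λ_χ : χ a character of Q}. In particular, the optimal frame bounds are A = min{λ_χ : λ_χ ≠ 0} and B = max_χ λ_χ. -/

import Mathlib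

open Matrix

section auxlemmas
open Polynomial

lemma aux_charpoly_diagonal {k : Type*} [Fintype k] [DecidableEq k] (d : k → ℂ) :
    (Matrix.diagonal d).charpoly = ∏ i, (X - C (d i)) := by
  have h : charmatrix (Matrix.diagonal d) = Matrix.diagonal fun i => X - C (d i) := by
    ext i j
    by_cases hij : i = j
    · subst hij; simp
    · simp [charmatrix_apply_ne _ _ _ hij, Matrix.diagonal_apply_ne _ hij]
  rw [Matrix.charpoly, h, Matrix.det_diagonal]

lemma aux_charpoly_conj {k : Type*} [Fintype k] [DecidableEq k]
    (W D : Matrix k k ℂ) (hW : IsUnit W.det) :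
    (W * D * W⁻¹).charpoly = D.charpoly := by
  have h1 : W * W⁻¹ = 1 := Matrix.mul_nonsing_inv W hW
  have hmapC : (W.map C) * (W⁻¹.map C) = 1 := by
    rw [← Matrix.map_mul, h1]; simp
  have key : W.map C * charmatrix D * (W⁻¹.map C) = charmatrix (W * D * W⁻¹) := by
    have hc : W.map C * Matrix.scalar k (X : ℂ[X]) = Matrix.scalar k (X : ℂ[X]) * W.map C :=
      (Matrix.scalar_commute (X : ℂ[X]) (fun r' => Commute.all _ _) (W.map C)).symm
    calc W.map C * charmatrix D * (W⁻¹.map C)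
        = (W.map C * Matrix.scalar k (X : ℂ[X]) - W.map C * ((C : ℂ →+* ℂ[X]).mapMatrix D))
            * (W⁻¹.map C) := by rw [charmatrix, Matrix.mul_sub]
      _ = Matrix.scalar k (X : ℂ[X]) * (W.map C * (W⁻¹.map C))
            - (W.map C * (D.map C) * (W⁻¹.map C)) := by
          rw [Matrix.sub_mul, hc]
          rw [mul_assoc (Matrix.scalar k (X : ℂ[X])) (W.map C) (W⁻¹.map C)]
          rfl
      _ = charmatrix (W * D * W⁻¹) := by
          rw [hmapC, mul_one, ← Matrix.map_mul, ← Matrix.map_mul, charmatrix]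
          rfl
  rw [Matrix.charpoly, ← key, Matrix.det_mul, Matrix.det_mul, Matrix.charpoly,
    mul_right_comm, ← Matrix.det_mul, hmapC, Matrix.det_one, one_mul]

lemma aux_dotProduct_sum {k ι : Type*} [Fintype k] [Fintype ι] (v : k → ℂ) (g : ι → k → ℂ) :
    v ⬝ᵥ (∑ i, g i) = ∑ i, v ⬝ᵥ g i := by
  simp only [dotProduct, Finset.sum_apply, Finset.mul_sum]
  exact Finset.sum_comm

lemma aux_sum_dotProduct {k ι : Type*} [Fintype k] [Fintype ι] (v : k → ℂ) (g : ι → k → ℂ) :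
    (∑ i, g i) ⬝ᵥ v = ∑ i, g i ⬝ᵥ v := by
  simp only [dotProduct, Finset.sum_apply, Finset.sum_mul]
  exact Finset.sum_comm

lemma aux_sum_mulVec {k ι : Type*} [Fintype k] [Fintype ι] (g : ι → Matrix k k ℂ) (v : k → ℂ) :
    (∑ i, g i) *ᵥ v = ∑ i, g i *ᵥ v := by
  ext j
  simp only [Matrix.mulVec, dotProduct, Finset.sum_apply, Matrix.sum_apply, Finset.sum_mul]
  rw [Finset.sum_comm]

lemma aux_star_dot {k : Type*} [Fintype k] (v : k → ℂ) :
    star v ⬝ᵥ v = (((∑ i, Complex.normSq (v i)) : ℝ) : ℂ) := by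
  push_cast
  simp only [dotProduct, Pi.star_apply, Complex.star_def, ← Complex.normSq_eq_conj_mul_self]

lemma aux_vecMulVec_mulVec {k : Type*} [Fintype k] (x y v : k → ℂ) :
    Matrix.vecMulVec x y *ᵥ v = (y ⬝ᵥ v) • x := by
  ext i
  simp only [Matrix.mulVec, Matrix.vecMulVec_apply, dotProduct, Pi.smul_apply, smul_eq_mul,
    Finset.sum_mul, Finset.mul_sum]
  refine Finset.sum_congr rfl fun j _ => ?_
  ring

end auxlemmas

set_option maxHeartbeats 3200000 in
theorem stmt_3 {m : ℕ} (hm : 0 < m)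
    (Q : Subgroup (Matrix.unitaryGroup (Fin m) ℂ)) [Fintype Q]
    (habelian : ∀ U V : Q, U * V = V * U)
    (φ : Fin m → ℂ)
    (hspan : Submodule.span ℂ
      (Set.range fun U : Q => (U : Matrix (Fin m) (Fin m) ℂ) *ᵥ φ) = ⊤)
    (S : Matrix (Fin m) (Fin m) ℂ)
    (hS : S = ∑ U : Q, vecMulVec ((U : Matrix (Fin m) (Fin m) ℂ) *ᵥ φ)
          (star ((U : Matrix (Fin m) (Fin m) ℂ) *ᵥ φ)))
    (hHerm : S.IsHermitian)
    [Fintype (Q →* ℂˣ)]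
    (lam : (Q →* ℂˣ) → ℂ)
    (hlam : ∀ χ : Q →* ℂˣ,
      lam χ = ∑ U : Q, (χ U : ℂ) * (star φ ⬝ᵥ ((U : Matrix (Fin m) (Fin m) ℂ) *ᵥ φ))) :
    (∀ χ : Q →* ℂˣ, ∃ r : ℝ, 0 ≤ r ∧ (r : ℂ) = lam χ) ∧
    (Finset.univ.val.map fun i : Fin m => ((hHerm.eigenvalues i : ℝ) : ℂ)) =
      (Finset.univ.val.map fun χ : Q →* ℂˣ => lam χ).filter (· ≠ 0) ∧
    (∀ a : ℝ, IsLeast {r : ℝ | ∃ i, hHerm.eigenvalues i = r} a ↔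
      IsLeast {r : ℝ | (∃ χ : Q →* ℂˣ, (r : ℂ) = lam χ) ∧ r ≠ 0} a) ∧
    (∀ b : ℝ, IsGreatest {r : ℝ | ∃ i, hHerm.eigenvalues i = r} b ↔
      IsGreatest {r : ℝ | ∃ χ : Q →* ℂˣ, (r : ℂ) = lam χ} b) := by
  classical
  -- notation
  set n : ℕ := Fintype.card Q with hn_def
  have hn0 : 0 < n := Fintype.card_pos
  have hnC : (n : ℂ) ≠ 0 := by exact_mod_cast hn0.ne'
  have hcard : Fintype.card (Q →* ℂˣ) = n := by
    letI : CommGroup Q := { (inferInstance : Group Q) with mul_comm := habelian }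
    haveI : NeZero (Monoid.exponent Q) :=
      ⟨(Monoid.exponent_pos.mpr (Monoid.ExponentExists.of_finite)).ne'⟩
    obtain ⟨e⟩ := CommGroup.monoidHom_mulEquiv_of_hasEnoughRootsOfUnity Q ℂ
    exact Fintype.card_congr e.toEquiv
  have hsep : ∀ U : Q, U ≠ 1 → ∃ ψ : Q →* ℂˣ, ψ U ≠ 1 := by
    letI : CommGroup Q := { (inferInstance : Group Q) with mul_comm := habelian }
    haveI : NeZero (Monoid.exponent Q) :=
      ⟨(Monoid.exponent_pos.mpr (Monoid.ExponentExists.of_finite)).ne'⟩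
    intro U hU
    exact CommGroup.exists_apply_ne_one_of_hasEnoughRootsOfUnity Q ℂ hU
  set f : Q → (Fin m → ℂ) := fun U => (U : Matrix (Fin m) (Fin m) ℂ) *ᵥ φ with hf_def
  set a : Q → ℂ := fun U => star φ ⬝ᵥ f U with ha_def
  set w : (Q →* ℂˣ) → (Fin m → ℂ) := fun χ => ∑ U : Q, (χ U : ℂ) • f U with hw_def
  -- star of coe
  have hUinv : ∀ U : Q, star ((U : Matrix (Fin m) (Fin m) ℂ)) =
      ((U⁻¹ : Q) : Matrix (Fin m) (Fin m) ℂ) := by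
    intro U
    have h1 : ((U⁻¹ : Q) : Matrix.unitaryGroup (Fin m) ℂ) =
        ((U : Matrix.unitaryGroup (Fin m) ℂ))⁻¹ := rfl
    rw [h1, ← Unitary.star_eq_inv, Unitary.coe_star]
  have hfdot : ∀ U V : Q, star (f U) ⬝ᵥ f V = a (U⁻¹ * V) := by
    intro U V
    have h2 : star (f U) ⬝ᵥ f V =
        star φ ⬝ᵥ ((star ((U : Matrix (Fin m) (Fin m) ℂ))) *ᵥ f V) := by
      rw [hf_def, star_mulVec, ← Matrix.dotProduct_mulVec]
      rfl
    rw [h2, hUinv U, hf_def, ha_def]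
    simp only [Matrix.mulVec_mulVec]
    rfl
  -- character values
  have hstarchar : ∀ (χ : Q →* ℂˣ) (U : Q), star ((χ U : ℂ)) = ((χ U⁻¹ : ℂ)) := by
    intro χ U
    have hzn : (χ U : ℂ) ^ n = 1 := by
      have h1 : (χ U) ^ n = 1 := by
        rw [← _root_.map_pow, pow_card_eq_one, _root_.map_one]
      have := congrArg (Units.val) h1
      push_cast at this
      exact this
    have habs : ‖(χ U : ℂ)‖ = 1 := by
      have h := congrArg (‖·‖) hzn
      rw [norm_pow, norm_one] at h
      rcases (pow_eq_one_iff_of_ne_zero hn0.ne').mp h with h1 | ⟨h1, _⟩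
      · exact h1
      · exfalso
        have h2 : (0:ℝ) ≤ ‖(χ U : ℂ)‖ := norm_nonneg _
        rw [h1] at h2; linarith
    have hstar : star (χ U : ℂ) * (χ U : ℂ) = 1 := by
      rw [Complex.star_def, ← Complex.normSq_eq_conj_mul_self, ← Complex.sq_norm, habs]
      norm_num
    have hprod : (χ U : ℂ) * ((χ U⁻¹ : ℂ)) = 1 := by
      have h1 : (χ U) * (χ U⁻¹) = 1 := by rw [← _root_.map_mul, mul_inv_cancel, _root_.map_one]
      have := congrArg (Units.val) h1
      push_cast at this
      exact this
    calc star (χ U : ℂ) = star (χ U : ℂ) * ((χ U : ℂ) * ((χ U⁻¹ : ℂ))) := by rw [hprod, mul_one]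
      _ = (star (χ U : ℂ) * (χ U : ℂ)) * ((χ U⁻¹ : ℂ)) := by ring
      _ = ((χ U⁻¹ : ℂ)) := by rw [hstar, one_mul]
  -- orthogonality over group elements
  have horthG : ∀ η : Q →* ℂˣ, η ≠ 1 → ∑ U : Q, ((η U : ℂ)) = 0 := by
    intro η hη
    obtain ⟨V, hV⟩ : ∃ V : Q, η V ≠ 1 := by
      by_contra h
      push_neg at h
      exact hη (MonoidHom.ext fun U => by rw [h U, MonoidHom.one_apply])
    have hre : ∑ U : Q, ((η U : ℂ)) = (η V : ℂ) * ∑ U : Q, ((η U : ℂ)) := by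
      calc ∑ U : Q, ((η U : ℂ)) = ∑ U : Q, ((η (V * U) : ℂ)) :=
            (Fintype.sum_equiv (Equiv.mulLeft V) (fun U => ((η (V * U) : ℂ)))
              (fun U => ((η U : ℂ))) (fun U => rfl)).symm
        _ = ∑ U : Q, (η V : ℂ) * ((η U : ℂ)) := by
            refine Finset.sum_congr rfl fun U _ => ?_
            rw [_root_.map_mul]
            push_cast
            ring
        _ = (η V : ℂ) * ∑ U : Q, ((η U : ℂ)) := by rw [Finset.mul_sum]
    have hfac : ((η V : ℂ) - 1) * ∑ U : Q, ((η U : ℂ)) = 0 := by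
      rw [sub_mul, one_mul, ← hre, sub_self]
    rcases mul_eq_zero.mp hfac with h | h
    · exfalso
      apply hV
      ext
      have : (η V : ℂ) = 1 := by linear_combination h
      exact this
    · exact h
  -- orthogonality over characters
  have horthX : ∀ U : Q, U ≠ 1 → ∑ χ : Q →* ℂˣ, ((χ U : ℂ)) = 0 := by
    intro U hU
    obtain ⟨ψ, hψ⟩ := hsep U hU
    have hre : ∑ χ : Q →* ℂˣ, ((χ U : ℂ)) = (ψ U : ℂ) * ∑ χ : Q →* ℂˣ, ((χ U : ℂ)) := by
      calc ∑ χ : Q →* ℂˣ, ((χ U : ℂ)) = ∑ χ : Q →* ℂˣ, (((ψ * χ) U : ℂ)) :=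
            (Fintype.sum_equiv (Equiv.mulLeft ψ) (fun χ => (((ψ * χ) U : ℂ)))
              (fun χ => ((χ U : ℂ))) (fun χ => rfl)).symm
        _ = ∑ χ : Q →* ℂˣ, (ψ U : ℂ) * ((χ U : ℂ)) := by
            refine Finset.sum_congr rfl fun χ _ => ?_
            rw [MonoidHom.mul_apply]
            push_cast
            ring
        _ = (ψ U : ℂ) * ∑ χ : Q →* ℂˣ, ((χ U : ℂ)) := by rw [Finset.mul_sum]
    have hfac : ((ψ U : ℂ) - 1) * ∑ χ : Q →* ℂˣ, ((χ U : ℂ)) = 0 := by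
      rw [sub_mul, one_mul, ← hre, sub_self]
    rcases mul_eq_zero.mp hfac with h | h
    · exfalso
      apply hψ
      ext
      have : (ψ U : ℂ) = 1 := by linear_combination h
      exact this
    · exact h
  -- inner product of f U with w ψ
  have hlam' : ∀ χ : Q →* ℂˣ, lam χ = ∑ U : Q, (χ U : ℂ) * a U := hlam
  have hinner : ∀ (U : Q) (ψ : Q →* ℂˣ), star (f U) ⬝ᵥ w ψ = (ψ U : ℂ) * lam ψ := by
    intro U ψ
    calc star (f U) ⬝ᵥ w ψ = ∑ V : Q, (ψ V : ℂ) * (star (f U) ⬝ᵥ f V) := by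
          rw [hw_def, aux_dotProduct_sum]
          refine Finset.sum_congr rfl fun V _ => ?_
          rw [dotProduct_smul]
          rfl
      _ = ∑ V : Q, (ψ V : ℂ) * a (U⁻¹ * V) := by
          refine Finset.sum_congr rfl fun V _ => ?_
          rw [hfdot]
      _ = ∑ V : Q, (ψ (U * V) : ℂ) * a V := by
          refine (Fintype.sum_equiv (Equiv.mulLeft U) _ _ fun V => ?_).symm
          simp only [Equiv.coe_mulLeft]
          rw [inv_mul_cancel_left]
      _ = (ψ U : ℂ) * lam ψ := by
          rw [hlam' ψ, Finset.mul_sum]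
          refine Finset.sum_congr rfl fun V _ => ?_
          rw [_root_.map_mul]
          push_cast
          ring
  -- orthogonality of the w's
  have hdot : ∀ χ ψ : Q →* ℂˣ, star (w χ) ⬝ᵥ w ψ =
      if χ = ψ then (n : ℂ) * lam χ else 0 := by
    intro χ ψ
    have hsw : star (w χ) = ∑ U : Q, star ((χ U : ℂ)) • star (f U) := by
      rw [hw_def]
      rw [star_sum]
      refine Finset.sum_congr rfl fun U _ => ?_
      rw [star_smul]
    have hmain : star (w χ) ⬝ᵥ w ψ = (∑ U : Q, (((χ⁻¹ * ψ) U : ℂ))) * lam ψ := by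
      calc star (w χ) ⬝ᵥ w ψ = ∑ U : Q, star ((χ U : ℂ)) * (star (f U) ⬝ᵥ w ψ) := by
            rw [hsw, aux_sum_dotProduct]
            refine Finset.sum_congr rfl fun U _ => ?_
            rw [smul_dotProduct]
            rfl
        _ = ∑ U : Q, (((χ⁻¹ * ψ) U : ℂ)) * lam ψ := by
            refine Finset.sum_congr rfl fun U _ => ?_
            rw [hstarchar, hinner, MonoidHom.mul_apply, MonoidHom.inv_apply, ← _root_.map_inv]
            push_cast
            ring
        _ = (∑ U : Q, (((χ⁻¹ * ψ) U : ℂ))) * lam ψ := by rw [Finset.sum_mul]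
    by_cases hcase : χ = ψ
    · subst hcase
      rw [if_pos rfl, hmain]
      have h1 : χ⁻¹ * χ = 1 := inv_mul_cancel χ
      rw [h1]
      have h2 : ∑ U : Q, (((1 : Q →* ℂˣ) U : ℂ)) = (n : ℂ) := by
        simp [hn_def]
      rw [h2]
    · rw [if_neg hcase, hmain, horthG _ ?_, zero_mul]
      intro hcon
      exact hcase (inv_mul_eq_one.mp hcon)
  -- eigenvector property
  have hS' : S = ∑ U : Q, vecMulVec (f U) (star (f U)) := hS
  have hSw : ∀ χ : Q →* ℂˣ, S *ᵥ w χ = lam χ • w χ := by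
    intro χ
    calc S *ᵥ w χ = ∑ U : Q, vecMulVec (f U) (star (f U)) *ᵥ w χ := by
          rw [hS', aux_sum_mulVec]
      _ = ∑ U : Q, ((χ U : ℂ) * lam χ) • f U := by
          refine Finset.sum_congr rfl fun U _ => ?_
          rw [aux_vecMulVec_mulVec, hinner]
      _ = lam χ • w χ := by
          rw [hw_def, Finset.smul_sum]
          refine Finset.sum_congr rfl fun U _ => ?_
          rw [smul_smul, mul_comm]
  -- nonnegativity
  have hr0 : ∀ χ : Q →* ℂˣ, ((((∑ k, Complex.normSq (w χ k)) : ℝ)) : ℂ) = (n : ℂ) * lam χ := by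
    intro χ
    have h1 := hdot χ χ
    rw [if_pos rfl] at h1
    rw [← h1, aux_star_dot]
  have hlam_real : ∀ χ : Q →* ℂˣ, ∃ r : ℝ, 0 ≤ r ∧ (r : ℂ) = lam χ := by
    intro χ
    refine ⟨(∑ k, Complex.normSq (w χ k)) / n, ?_, ?_⟩
    · apply div_nonneg
      · exact Finset.sum_nonneg fun k _ => Complex.normSq_nonneg _
      · exact_mod_cast hn0.le
    · have hdiv : (((∑ k, Complex.normSq (w χ k)) / n : ℝ) : ℂ)
          = ((((∑ k, Complex.normSq (w χ k)) : ℝ)) : ℂ) / (n : ℂ) := by push_cast; ring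
      rw [hdiv, hr0 χ, mul_comm, mul_div_assoc, div_self hnC, mul_one]
  have hwzero : ∀ χ : Q →* ℂˣ, lam χ = 0 → w χ = 0 := by
    intro χ hχ
    have h := hr0 χ
    rw [hχ, mul_zero] at h
    have h2 : (∑ k, Complex.normSq (w χ k)) = 0 := by exact_mod_cast h
    have h3 := (Finset.sum_eq_zero_iff_of_nonneg
      (fun k _ => Complex.normSq_nonneg (w χ k))).mp h2
    funext k
    exact Complex.normSq_eq_zero.mp (h3 k (Finset.mem_univ k))
  -- the subtype of nonzero lam
  set T := {χ : Q →* ℂˣ // lam χ ≠ 0} with hT_def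
  have hXsum : ∀ Ug : Q, ∑ χ : Q →* ℂˣ, ((χ Ug : ℂ)) = if Ug = 1 then (n:ℂ) else 0 := by
    intro Ug
    by_cases h : Ug = 1
    · subst h
      rw [if_pos rfl]
      simp only [_root_.map_one, Units.val_one, Finset.sum_const, Finset.card_univ,
        nsmul_eq_mul, mul_one, hcard]
    · rw [if_neg h]
      exact horthX Ug h
  have hkey : ∀ U : Q, ∑ χ : Q →* ℂˣ, ((χ U⁻¹ : ℂ)) • w χ = (n:ℂ) • f U := by
    intro U
    calc ∑ χ : Q →* ℂˣ, ((χ U⁻¹ : ℂ)) • w χ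
        = ∑ χ : Q →* ℂˣ, ∑ V : Q, ((χ (U⁻¹ * V) : ℂ)) • f V := by
          refine Finset.sum_congr rfl fun χ _ => ?_
          rw [hw_def, Finset.smul_sum]
          refine Finset.sum_congr rfl fun V _ => ?_
          rw [smul_smul, _root_.map_mul, Units.val_mul]
      _ = ∑ V : Q, (∑ χ : Q →* ℂˣ, ((χ (U⁻¹ * V) : ℂ))) • f V := by
          rw [Finset.sum_comm]
          refine Finset.sum_congr rfl fun V _ => ?_
          rw [Finset.sum_smul]
      _ = ∑ V : Q, (if U⁻¹ * V = 1 then (n:ℂ) else 0) • f V := by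
          refine Finset.sum_congr rfl fun V _ => ?_
          rw [hXsum]
      _ = (n:ℂ) • f U := by
          rw [Finset.sum_eq_single U]
          · rw [if_pos (inv_mul_cancel U)]
          · intro V _ hV
            rw [if_neg, zero_smul]
            intro hcon
            exact hV (inv_mul_eq_one.mp hcon).symm
          · intro h
            exact absurd (Finset.mem_univ U) h
  have hspanw_all : Submodule.span ℂ (Set.range w) = ⊤ := by
    rw [eq_top_iff, ← hspan]
    apply Submodule.span_le.mpr
    rintro x ⟨U, rfl⟩
    have hx : f U = (n:ℂ)⁻¹ • ∑ χ : Q →* ℂˣ, ((χ U⁻¹ : ℂ)) • w χ := by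
      rw [hkey U, smul_smul, inv_mul_cancel₀ hnC, one_smul]
    show f U ∈ _
    rw [hx]
    exact Submodule.smul_mem _ _ (Submodule.sum_mem _ fun χ _ =>
      Submodule.smul_mem _ _ (Submodule.subset_span ⟨χ, rfl⟩))
  have hspanw : Submodule.span ℂ (Set.range fun t : T => w t.1) = ⊤ := by
    rw [eq_top_iff, ← hspanw_all]
    apply Submodule.span_le.mpr
    rintro x ⟨χ, rfl⟩
    by_cases h : lam χ = 0
    · rw [hwzero χ h]
      exact Submodule.zero_mem _
    · exact Submodule.subset_span ⟨⟨χ, h⟩, rfl⟩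
  have hli : LinearIndependent ℂ (fun t : T => w t.1) := by
    rw [Fintype.linearIndependent_iff]
    intro g hg t
    have h0 := congrArg (fun v => star (w t.1) ⬝ᵥ v) hg
    simp only [dotProduct_zero] at h0
    rw [aux_dotProduct_sum] at h0
    have h1 : ∀ s : T, star (w t.1) ⬝ᵥ (g s • w s.1) =
        g s * (if t = s then (n : ℂ) * lam t.1 else 0) := by
      intro s
      rw [dotProduct_smul, hdot, smul_eq_mul]
      by_cases hts : t = s
      · rw [if_pos (congrArg Subtype.val hts), if_pos hts]
      · rw [if_neg (fun hc => hts (Subtype.coe_inj.mp hc)), if_neg hts]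
    rw [Finset.sum_congr rfl (fun s _ => h1 s), Finset.sum_eq_single t] at h0
    · rw [if_pos rfl] at h0
      rcases mul_eq_zero.mp h0 with h | h
      · exact h
      · exact absurd h (mul_ne_zero hnC t.2)
    · intro s _ hs
      rw [if_neg (fun hc => hs hc.symm), mul_zero]
    · intro h
      exact absurd (Finset.mem_univ t) h
  have hcardT : Fintype.card T = m := by
    have b : Module.Basis T ℂ (Fin m → ℂ) := Module.Basis.mk hli (by rw [hspanw])
    rw [← Module.finrank_eq_card_basis b, Module.finrank_fin_fun]
  -- the equivalence
  obtain ⟨e⟩ : Nonempty (Fin m ≃ T) := ⟨Fintype.equivOfCardEq (by rw [hcardT, Fintype.card_fin])⟩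
  -- the matrix W
  set W : Matrix (Fin m) (Fin m) ℂ := Matrix.of (fun i j => w (e j).1 i) with hW_def
  have hWdiag : star W * W = Matrix.diagonal (fun j => (n:ℂ) * lam (e j).1) := by
    ext i j
    have h1 : (star W * W) i j = star (w (e i).1) ⬝ᵥ w (e j).1 := rfl
    rw [h1, hdot]
    by_cases hij : i = j
    · subst hij
      rw [if_pos rfl, Matrix.diagonal_apply_eq]
    · rw [if_neg, Matrix.diagonal_apply_ne _ hij]
      intro hc
      exact hij (e.injective (Subtype.ext hc))
  have hWdet : IsUnit W.det := by
    rw [isUnit_iff_ne_zero]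
    intro hdet0
    have h1 := congrArg Matrix.det hWdiag
    rw [Matrix.det_mul, Matrix.det_diagonal, hdet0, mul_zero] at h1
    have h2 : ∏ j, ((n:ℂ) * lam (e j).1) ≠ 0 :=
      Finset.prod_ne_zero_iff.mpr fun j _ => mul_ne_zero hnC (e j).2
    exact h2 h1.symm
  have hSWmul : S * W = W * Matrix.diagonal (fun j => lam (e j).1) := by
    ext i j
    have h1 : (S * W) i j = (S *ᵥ w (e j).1) i := rfl
    rw [h1, hSw, Matrix.mul_diagonal]
    simp only [hW_def, Matrix.of_apply, Pi.smul_apply, smul_eq_mul]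
    ring
  have hSW : S = W * Matrix.diagonal (fun j => lam (e j).1) * W⁻¹ := by
    calc S = S * (W * W⁻¹) := by rw [Matrix.mul_nonsing_inv W hWdet, mul_one]
      _ = (S * W) * W⁻¹ := by rw [mul_assoc]
      _ = W * Matrix.diagonal (fun j => lam (e j).1) * W⁻¹ := by rw [hSWmul]
  -- multiset equality
  have hcp1 : S.charpoly = ∏ j : Fin m, (Polynomial.X - Polynomial.C (lam (e j).1)) := by
    rw [hSW, aux_charpoly_conj _ _ hWdet, aux_charpoly_diagonal]
  have hVunit : (hHerm.eigenvectorUnitary : Matrix (Fin m) (Fin m) ℂ) *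
      star (hHerm.eigenvectorUnitary : Matrix (Fin m) (Fin m) ℂ) = 1 :=
    Matrix.mem_unitaryGroup_iff.mp hHerm.eigenvectorUnitary.2
  have hVdet : IsUnit (hHerm.eigenvectorUnitary : Matrix (Fin m) (Fin m) ℂ).det :=
    Matrix.isUnit_det_of_right_inverse hVunit
  have hVinv : (hHerm.eigenvectorUnitary : Matrix (Fin m) (Fin m) ℂ)⁻¹ =
      star (hHerm.eigenvectorUnitary : Matrix (Fin m) (Fin m) ℂ) :=
    Matrix.inv_eq_right_inv hVunit
  have hcp2 : S.charpoly = ∏ i : Fin m, (Polynomial.X -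
      Polynomial.C ((hHerm.eigenvalues i : ℝ) : ℂ)) := by
    have hspec : S = (hHerm.eigenvectorUnitary : Matrix (Fin m) (Fin m) ℂ) *
        Matrix.diagonal (RCLike.ofReal ∘ hHerm.eigenvalues) *
        (hHerm.eigenvectorUnitary : Matrix (Fin m) (Fin m) ℂ)⁻¹ := by
      rw [hVinv]
      exact hHerm.spectral_theorem
    calc S.charpoly = ((hHerm.eigenvectorUnitary : Matrix (Fin m) (Fin m) ℂ) *
        Matrix.diagonal (RCLike.ofReal ∘ hHerm.eigenvalues) *
        (hHerm.eigenvectorUnitary : Matrix (Fin m) (Fin m) ℂ)⁻¹).charpoly :=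
          congrArg Matrix.charpoly hspec
      _ = ∏ i : Fin m, (Polynomial.X - Polynomial.C ((hHerm.eigenvalues i : ℝ) : ℂ)) := by
          rw [aux_charpoly_conj _ _ hVdet, aux_charpoly_diagonal]
          rfl
  have hprodeq : ∏ i : Fin m, (Polynomial.X - Polynomial.C ((hHerm.eigenvalues i : ℝ) : ℂ)) =
      ∏ j : Fin m, (Polynomial.X - Polynomial.C (lam (e j).1)) := by
    rw [← hcp2, hcp1]
  have hms : (Finset.univ.val.map fun i : Fin m => ((hHerm.eigenvalues i : ℝ) : ℂ)) =
      Finset.univ.val.map (fun j : Fin m => lam (e j).1) := by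
    have h1 := Polynomial.roots_multiset_prod_X_sub_C
      (Finset.univ.val.map fun i : Fin m => ((hHerm.eigenvalues i : ℝ) : ℂ))
    have h2 := Polynomial.roots_multiset_prod_X_sub_C
      (Finset.univ.val.map fun j : Fin m => lam (e j).1)
    have e1 : ((Finset.univ.val.map fun i : Fin m => ((hHerm.eigenvalues i : ℝ) : ℂ)).map
        (fun a => Polynomial.X - Polynomial.C a)).prod =
        ∏ i : Fin m, (Polynomial.X - Polynomial.C ((hHerm.eigenvalues i : ℝ) : ℂ)) := by
      rw [Multiset.map_map]
      rfl
    have e2 : ((Finset.univ.val.map fun j : Fin m => lam (e j).1).map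
        (fun a => Polynomial.X - Polynomial.C a)).prod =
        ∏ j : Fin m, (Polynomial.X - Polynomial.C (lam (e j).1)) := by
      rw [Multiset.map_map]
      rfl
    rw [← h1, ← h2, e1, e2, hprodeq]
  have hms2 : (Finset.univ.val.map fun i : Fin m => ((hHerm.eigenvalues i : ℝ) : ℂ)) =
      (Finset.univ.val.map fun χ : Q →* ℂˣ => lam χ).filter (· ≠ 0) := by
    rw [hms, Multiset.filter_map]
    have hsub : ((Finset.univ : Finset T).map
        (Function.Embedding.subtype fun χ => lam χ ≠ 0)).val =
        (Finset.univ.val.filter ((fun c => c ≠ 0) ∘ fun χ : Q →* ℂˣ => lam χ)) := by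
      have h3 : (Finset.univ : Finset (Q →* ℂˣ)).val.filter
          ((fun c => c ≠ 0) ∘ fun χ : Q →* ℂˣ => lam χ) =
          (Finset.filter (fun χ : Q →* ℂˣ => lam χ ≠ 0) Finset.univ).val := by
        rw [Finset.filter_val]
        exact Multiset.filter_congr fun x _ => Iff.rfl
      rw [h3]
      congr 1
      ext χ
      simp
    rw [← hsub, Finset.map_val, Multiset.map_map]
    have hTuniv : (Finset.univ : Finset (Fin m)).map e.toEmbedding =
        (Finset.univ : Finset T) := Finset.univ_map_equiv_to_embedding e
    rw [← hTuniv, Finset.map_val, Multiset.map_map]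
    rfl
  -- the set equality
  have hEL : ∀ r : ℝ, (∃ i, hHerm.eigenvalues i = r) ↔
      ((∃ χ : Q →* ℂˣ, (r : ℂ) = lam χ) ∧ r ≠ 0) := by
    intro r
    constructor
    · rintro ⟨i, hi⟩
      have hmem : ((r : ℝ) : ℂ) ∈
          (Finset.univ.val.map fun i : Fin m => ((hHerm.eigenvalues i : ℝ) : ℂ)) :=
        Multiset.mem_map.mpr ⟨i, Finset.mem_univ_val i, by rw [hi]⟩
      rw [hms2] at hmem
      rw [Multiset.mem_filter] at hmem
      obtain ⟨hmem1, hne0⟩ := hmem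
      obtain ⟨χ, _, hχ⟩ := Multiset.mem_map.mp hmem1
      refine ⟨⟨χ, hχ.symm⟩, ?_⟩
      intro h0
      apply hne0
      rw [h0]
      exact Complex.ofReal_zero
    · rintro ⟨⟨χ, hχ⟩, hr0⟩
      have hmem : ((r : ℝ) : ℂ) ∈
          (Finset.univ.val.map fun χ : Q →* ℂˣ => lam χ).filter (· ≠ 0) := by
        rw [Multiset.mem_filter]
        exact ⟨Multiset.mem_map.mpr ⟨χ, Finset.mem_univ_val χ, hχ.symm⟩,
          Complex.ofReal_ne_zero.mpr hr0⟩
      rw [← hms2] at hmem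
      obtain ⟨i, _, hi⟩ := Multiset.mem_map.mp hmem
      exact ⟨i, Complex.ofReal_inj.mp hi⟩
  have hsets : {r : ℝ | ∃ i, hHerm.eigenvalues i = r} =
      {r : ℝ | (∃ χ : Q →* ℂˣ, (r : ℂ) = lam χ) ∧ r ≠ 0} :=
    Set.ext hEL
  have hnonneg : ∀ r : ℝ, (∃ χ : Q →* ℂˣ, (r : ℂ) = lam χ) → 0 ≤ r := by
    intro r ⟨χ, hχ⟩
    obtain ⟨r', hr'0, hr'⟩ := hlam_real χ
    have : r = r' := Complex.ofReal_inj.mp (by rw [hχ, hr'])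
    rw [this]
    exact hr'0
  have hpos : ∀ r ∈ {r : ℝ | ∃ i, hHerm.eigenvalues i = r}, 0 < r := by
    intro r hr
    have h1 := (hEL r).mp hr
    exact lt_of_le_of_ne (hnonneg r h1.1) (Ne.symm h1.2)
  have hne : ∃ r, r ∈ {r : ℝ | ∃ i, hHerm.eigenvalues i = r} :=
    ⟨hHerm.eigenvalues ⟨0, hm⟩, ⟨0, hm⟩, rfl⟩
  refine ⟨hlam_real, hms2, fun a => by rw [hsets], fun b => ?_⟩
  constructor
  · rintro ⟨hbmem, hub⟩
    have hb0 : 0 < b := hpos b hbmem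
    have hbL := (hEL b).mp hbmem
    refine ⟨hbL.1, ?_⟩
    intro r hr
    by_cases hr0 : r = 0
    · rw [hr0]; exact hb0.le
    · exact hub ((hEL r).mpr ⟨hr, hr0⟩)
  · rintro ⟨hbmem, hub⟩
    obtain ⟨r0, hr0⟩ := hne
    have hr0pos : 0 < r0 := hpos r0 hr0
    have hr0L := (hEL r0).mp hr0
    have hbr0 : r0 ≤ b := hub hr0L.1
    have hb0 : b ≠ 0 := by
      intro h
      rw [h] at hbr0
      linarith
    exact ⟨(hEL b).mpr ⟨hbmem, hb0⟩, fun r hr => hub ((hEL r).mp hr).1⟩
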